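/- Let Q be a connected Laplacian matrix on V = {0,…,n} with Laplacian lattice L_G, and let m = (1/2)·Σ_{i≠j} b_{ij} be the number of edges of the multigraph and g = m − n its genus. Then the covering radius of L_G under the simplicial distance function, Cov_△(L_G) = inf{R ≥ 0 : for every p ∈ H_0 there exists q ∈ L_G with d_△(q,p) ≤ R}, equals (g+n)/(n+1) = m/(n+1). -/

import Mathlib

open Finset

/-- A Laplacian matrix of a multigraph on vertex set `Fin (n+1)`:
symmetric, nonpositive off-diagonal entries, all row sums zero. -/
def IsLaplacian (n : ℕ) (Q : Matrix (Fin (n+1)) (Fin (n+1)) ℤ) : Prop :=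
  (∀ i j, Q i j = Q j i) ∧ (∀ i j, i ≠ j → Q i j ≤ 0) ∧ (∀ i, ∑ j, Q i j = 0)

/-- A connected Laplacian matrix: the graph with an edge `{i,j}` whenever
`b_{ij} = -Q i j > 0` is connected. -/
def IsConnectedLaplacian (n : ℕ) (Q : Matrix (Fin (n+1)) (Fin (n+1)) ℤ) : Prop :=
  IsLaplacian n Q ∧ (SimpleGraph.fromRel (fun i j => Q i j ≠ 0)).Connected

/-- The Laplacian lattice: the subgroup of `ℤ^{n+1}` generated by the rows of `Q`. -/
noncomputable def lapLattice (n : ℕ) (Q : Matrix (Fin (n+1)) (Fin (n+1)) ℤ) :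
    AddSubgroup (Fin (n+1) → ℤ) :=
  AddSubgroup.closure (Set.range fun i => Q i)

/-- The hyperplane `H_0 = {x ∈ ℝ^{n+1} : ∑ x i = 0}`. -/
def H0 (n : ℕ) : Set (Fin (n+1) → ℝ) := {x | ∑ i, x i = 0}

/-- The simplicial distance function on `H_0`: `d_△(p,q) = max_i (p i - q i)`. -/
noncomputable def simpDist (n : ℕ) (p q : Fin (n+1) → ℝ) : ℝ :=
  Finset.univ.sup' Finset.univ_nonempty fun i => p i - q i

/-- Coercion of an integer vector to a real vector. -/
noncomputable def intVec (n : ℕ) (q : Fin (n+1) → ℤ) : Fin (n+1) → ℝ := fun i => (q i : ℝ)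

/-- The root lattice `A_n = {x ∈ ℤ^{n+1} : ∑ x i = 0}`. -/
def rootLattice (n : ℕ) : AddSubgroup (Fin (n+1) → ℤ) where
  carrier := {x | ∑ i, x i = 0}
  add_mem' := by
    intro a b ha hb
    simp only [Set.mem_setOf_eq, Pi.add_apply, Finset.sum_add_distrib] at *
    omega
  zero_mem' := by simp
  neg_mem' := by
    intro a ha
    simp only [Set.mem_setOf_eq, Pi.neg_apply, Finset.sum_neg_distrib] at *
    omega

/-- The `i`-th row of `Q` as a real vector. -/
noncomputable def rowVec (n : ℕ) (Q : Matrix (Fin (n+1)) (Fin (n+1)) ℤ) (i : Fin (n+1)) :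
    Fin (n+1) → ℝ := fun j => (Q i j : ℝ)

/-- `u^σ_k = b_{σ(0)} + ⋯ + b_{σ(k)}`. -/
noncomputable def uPerm (n : ℕ) (Q : Matrix (Fin (n+1)) (Fin (n+1)) ℤ)
    (σ : Equiv.Perm (Fin (n+1))) (k : Fin (n+1)) : Fin (n+1) → ℝ :=
  ∑ j ∈ Finset.Iic k, rowVec n Q (σ j)

/-- The Delaunay polytope of the origin: the union over all permutations `σ`
of the simplices `△_σ = conv{u^σ_0, …, u^σ_n}`. -/
noncomputable def HDel (n : ℕ) (Q : Matrix (Fin (n+1)) (Fin (n+1)) ℤ) :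
    Set (Fin (n+1) → ℝ) :=
  ⋃ σ : Equiv.Perm (Fin (n+1)), convexHull ℝ (Set.range (uPerm n Q σ))

/-- `u_S = ∑_{i ∈ S} b_i`, as a real vector. -/
noncomputable def uCut (n : ℕ) (Q : Matrix (Fin (n+1)) (Fin (n+1)) ℤ)
    (S : Finset (Fin (n+1))) : Fin (n+1) → ℝ := ∑ i ∈ S, rowVec n Q i



/-- `lam Q f = Qᵀ f`, a general element of the Laplacian lattice. -/
def lam {n : ℕ} (Q : Matrix (Fin (n+1)) (Fin (n+1)) ℤ) (f : Fin (n+1) → ℤ) :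
    Fin (n+1) → ℤ := fun v => ∑ i, f i * Q i v

lemma mem_lapLattice {n : ℕ} {Q : Matrix (Fin (n+1)) (Fin (n+1)) ℤ}
    {x : Fin (n+1) → ℤ} : x ∈ lapLattice n Q ↔ ∃ f, x = lam Q f := by
  constructor
  · intro hx
    refine AddSubgroup.closure_induction ?_ ?_ ?_ ?_ hx
    · rintro y ⟨i, rfl⟩
      refine ⟨Pi.single i 1, funext fun v => ?_⟩
      have : ∀ j ∈ univ, j ≠ i → Pi.single (M := fun _ => ℤ) i 1 j * Q j v = 0 := by
        intro j _ hj; simp [Pi.single_apply, hj]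
      simp only [lam]
      rw [Finset.sum_eq_single i this (by simp)]
      simp
    · exact ⟨0, by funext v; simp [lam]⟩
    · rintro y z - - ⟨f, rfl⟩ ⟨g, rfl⟩
      exact ⟨f + g, by funext v; simp [lam, add_mul, Finset.sum_add_distrib]⟩
    · rintro y - ⟨f, rfl⟩
      exact ⟨-f, by funext v; simp [lam, Finset.sum_neg_distrib]⟩
  · rintro ⟨f, rfl⟩
    have : lam Q f = ∑ i, f i • (Q i) := by
      funext v
      rw [Finset.sum_apply]
      simp [lam]
    rw [this]
    exact sum_mem (fun i _ =>
      AddSubgroup.zsmul_mem _ (AddSubgroup.subset_closure (Set.mem_range_self i)) _)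

lemma lam_eq {n : ℕ} {Q : Matrix (Fin (n+1)) (Fin (n+1)) ℤ}
    (hsym : ∀ i j, Q i j = Q j i) (hrow : ∀ i, ∑ j, Q i j = 0)
    (f : Fin (n+1) → ℤ) (v : Fin (n+1)) :
    lam Q f v = ∑ i ∈ univ.erase v, (-Q v i) * (f v - f i) := by
  have h2 : (∑ i ∈ univ.erase v, Q v i) + Q v v = ∑ j, Q v j :=
    Finset.sum_erase_add univ (fun i => Q v i) (mem_univ v)
  have h1 : ∑ i ∈ univ.erase v, Q v i = -Q v v := by
    have := hrow v; omega
  have e1 : ∀ i ∈ univ.erase v, (-Q v i) * (f v - f i) = Q v i * f i - Q v i * f v :=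
    fun i _ => by ring
  rw [Finset.sum_congr rfl e1, Finset.sum_sub_distrib, ← Finset.sum_mul, h1]
  calc lam Q f v = ∑ i, Q v i * f i := by
        exact Finset.sum_congr rfl (fun i _ => by rw [hsym i v, mul_comm])
    _ = ∑ i ∈ univ.erase v, Q v i * f i + Q v v * f v :=
        (Finset.sum_erase_add _ _ (mem_univ v)).symm
    _ = _ := by ring

lemma erase_sum_ite {n : ℕ} (B : Finset (Fin (n+1))) (g : Fin (n+1) → Fin (n+1) → ℤ) (x : Fin (n+1)) :
    ∑ y ∈ B.erase x, g x y = ∑ y ∈ B, if y ≠ x then g x y else 0 := by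
  rw [Finset.sum_ite, Finset.sum_const_zero, add_zero]
  congr 1
  ext y
  simp [Finset.mem_erase, and_comm]

lemma sum_pairs_antisymm {n : ℕ} (B : Finset (Fin (n+1))) (g : Fin (n+1) → Fin (n+1) → ℤ)
    (h : ∀ x y, g x y = - g y x) : ∑ x ∈ B, ∑ y ∈ B.erase x, g x y = 0 := by
  have key : ∑ x ∈ B, ∑ y ∈ B.erase x, g x y = - ∑ x ∈ B, ∑ y ∈ B.erase x, g x y := by
    calc ∑ x ∈ B, ∑ y ∈ B.erase x, g x y
        = ∑ x ∈ B, ∑ y ∈ B, if y ≠ x then g x y else 0 := by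
          exact Finset.sum_congr rfl fun x _ => erase_sum_ite B g x
      _ = ∑ y ∈ B, ∑ x ∈ B, if y ≠ x then g x y else 0 := Finset.sum_comm
      _ = ∑ x ∈ B, ∑ y ∈ B, if x ≠ y then g y x else 0 := rfl
      _ = ∑ x ∈ B, ∑ y ∈ B, -(if y ≠ x then g x y else 0) := by
          refine Finset.sum_congr rfl fun x _ => Finset.sum_congr rfl fun y _ => ?_
          by_cases hxy : x = y
          · simp [hxy]
          · simp [hxy, Ne.symm hxy, h y x]
      _ = - ∑ x ∈ B, ∑ y ∈ B, if y ≠ x then g x y else 0 := by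
          simp [Finset.sum_neg_distrib]
      _ = - ∑ x ∈ B, ∑ y ∈ B.erase x, g x y := by
          congr 1
          exact Finset.sum_congr rfl fun x _ => (erase_sum_ite B g x).symm
  omega

/-- splitting the off-diagonal sum into `j < v` and `v < j` parts -/
lemma sum_erase_split {n : ℕ} (g : Fin (n+1) → Fin (n+1) → ℤ) (v : Fin (n+1)) :
    ∑ j ∈ univ.erase v, g v j
      = (∑ j ∈ univ.filter (fun j => j < v), g v j)
        + ∑ j ∈ univ.filter (fun j => v < j), g v j := by
  have : univ.erase v =
      (univ.filter (fun j => j < v)) ∪ (univ.filter (fun j => v < j)) := by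
    ext j
    simp only [Finset.mem_erase, Finset.mem_union, Finset.mem_filter, Finset.mem_univ,
      true_and, and_true]
    constructor
    · intro hj; exact lt_or_gt_of_ne hj
    · rintro (h | h)
      · exact ne_of_lt h
      · exact ne_of_gt h
  rw [this, Finset.sum_union]
  rw [Finset.disjoint_filter]
  intro x _ h1 h2
  exact absurd h2 (not_lt_of_gt h1)

/-- the doubled lower-triangular sum equals the full off-diagonal sum,
for symmetric `g` -/
lemma sum_lt_twice {n : ℕ} (g : Fin (n+1) → Fin (n+1) → ℤ)
    (hs : ∀ x y, g x y = g y x) :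
    2 * (∑ v, ∑ j ∈ univ.filter (fun j => j < v), g v j)
      = ∑ v, ∑ j ∈ univ.erase v, g v j := by
  have e2 : ∑ v, ∑ j ∈ univ.filter (fun j => v < j), g v j
      = ∑ v, ∑ j ∈ univ.filter (fun j => j < v), g v j := by
    calc ∑ v, ∑ j ∈ univ.filter (fun j => v < j), g v j
        = ∑ v, ∑ j ∈ univ, if v < j then g v j else 0 := by
          exact Finset.sum_congr rfl fun v _ => by rw [Finset.sum_filter]
      _ = ∑ j ∈ univ, ∑ v ∈ univ, if v < j then g v j else 0 := Finset.sum_comm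
      _ = ∑ v, ∑ j ∈ univ, if j < v then g v j else 0 := by
          refine Finset.sum_congr rfl fun v _ => Finset.sum_congr rfl fun j _ => ?_
          rw [hs v j]
      _ = ∑ v, ∑ j ∈ univ.filter (fun j => j < v), g v j := by
          exact Finset.sum_congr rfl fun v _ => (Finset.sum_filter _ _).symm
  rw [Finset.sum_congr rfl fun v _ => sum_erase_split g v, Finset.sum_add_distrib, e2]
  ring

lemma exists_cross {V' : Type*} {G : SimpleGraph V'} {B : Set V'} :
    ∀ {x y : V'}, G.Walk x y → x ∈ B → y ∉ B → ∃ a ∈ B, ∃ c, c ∉ B ∧ G.Adj a c := by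
  intro x y w
  induction w with
  | nil => intro h1 h2; exact absurd h1 h2
  | @cons u v z h p ih =>
    intro h1 h2
    by_cases hv : v ∈ B
    · exact ih hv h2
    · exact ⟨u, h1, v, hv, h⟩

lemma dist_lt_card {V' : Type*} [Fintype V'] [DecidableEq V'] {G : SimpleGraph V'}
    (hc : G.Connected) (u v : V') : G.dist u v < Fintype.card V' := by
  obtain ⟨w⟩ := hc.preconnected u v
  calc G.dist u v ≤ (w.toPath : G.Walk u v).length := SimpleGraph.dist_le _
    _ < Fintype.card V' := w.toPath.2.length_lt

lemma exists_closer {V' : Type*} {G : SimpleGraph V'} (hc : G.Connected) {q v : V'}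
    (hne : v ≠ q) : ∃ u, G.Adj v u ∧ G.dist q u + 1 ≤ G.dist q v := by
  obtain ⟨w, hw⟩ := hc.exists_walk_length_eq_dist v q
  cases w with
  | nil => exact absurd rfl hne
  | @cons _ u₀ _ h p =>
    refine ⟨u₀, h, ?_⟩
    have h1 : G.dist u₀ q ≤ p.length := SimpleGraph.dist_le p
    have h2 : (SimpleGraph.Walk.cons h p).length = p.length + 1 :=
      SimpleGraph.Walk.length_cons h p
    rw [SimpleGraph.dist_comm (u := q) (v := u₀), SimpleGraph.dist_comm (u := q) (v := v)]
    omega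

lemma dist_adj_le {V' : Type*} {G : SimpleGraph V'} (hc : G.Connected) {q v u : V'}
    (h : G.Adj v u) : G.dist q u ≤ G.dist q v + 1 := by
  have h1 : G.dist v u ≤ 1 := by
    have := SimpleGraph.dist_le (SimpleGraph.Walk.cons h SimpleGraph.Walk.nil)
    simpa using this
  have := hc.dist_triangle (u := q) (v := v) (w := u)
  omega

section Eff
variable {n : ℕ} {Q : Matrix (Fin (n+1)) (Fin (n+1)) ℤ}

/-- the feasibility set for Dhar / reduced-divisor argument -/
def feas (Q : Matrix (Fin (n+1)) (Fin (n+1)) ℤ) (D : Fin (n+1) → ℤ) : Set (Fin (n+1) → ℤ) :=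
  {f | f 0 = 0 ∧ ∀ v, v ≠ 0 → lam Q f v ≤ D v}

lemma feas_nonempty (hsym : ∀ i j, Q i j = Q j i) (hoff : ∀ i j, i ≠ j → Q i j ≤ 0)
    (hrow : ∀ i, ∑ j, Q i j = 0)
    (hconn : (SimpleGraph.fromRel (fun i j => Q i j ≠ 0)).Connected)
    (D : Fin (n+1) → ℤ) : ∃ f, f ∈ feas Q D := by
  set G := SimpleGraph.fromRel (fun i j => Q i j ≠ 0) with hGdef
  have hadj : ∀ v u, G.Adj v u ↔ v ≠ u ∧ Q v u ≠ 0 := by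
    intro v u
    rw [hGdef, SimpleGraph.fromRel_adj]
    constructor
    · rintro ⟨h1, h2 | h2⟩
      · exact ⟨h1, h2⟩
      · exact ⟨h1, by rw [hsym]; exact h2⟩
    · rintro ⟨h1, h2⟩; exact ⟨h1, Or.inl h2⟩
  have hb1 : ∀ v u, G.Adj v u → 1 ≤ -Q v u := by
    intro v u h
    obtain ⟨h1, h2⟩ := (hadj v u).1 h
    have := hoff v u h1
    omega
  set Cc : ℤ := ∑ v, max (-(D v)) 0 with hCc
  set Bg : ℤ := ∑ v, ∑ u ∈ univ.erase v, -Q v u with hBg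
  have hCc0 : 0 ≤ Cc := Finset.sum_nonneg fun v _ => le_max_right _ _
  have hCcD : ∀ v, -Cc ≤ D v := by
    intro v
    have h1 : max (-(D v)) 0 ≤ Cc :=
      Finset.single_le_sum (f := fun v => max (-(D v)) 0)
        (fun i _ => le_max_right _ _) (mem_univ v)
    have h2 := le_max_left (-(D v)) 0
    omega
  have hrowb : ∀ v, 0 ≤ ∑ u ∈ univ.erase v, -Q v u := fun v =>
    Finset.sum_nonneg fun u hu => by
      have := hoff v u (Ne.symm (Finset.mem_erase.1 hu).1); omega
  have hBg0 : 0 ≤ Bg := Finset.sum_nonneg fun v _ => hrowb v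
  have hBgrow : ∀ v, ∑ u ∈ univ.erase v, -Q v u ≤ Bg :=
    fun v => Finset.single_le_sum (fun i _ => hrowb i) (mem_univ v)
  set c : ℕ → ℤ := fun d => ∑ k ∈ Finset.range d, Cc * (Bg+1)^(n - k) with hc
  have hterm : ∀ k : ℕ, 0 ≤ Cc * (Bg+1)^(n - k) := fun k =>
    mul_nonneg hCc0 (pow_nonneg (by omega) _)
  have hcmono : ∀ {d d' : ℕ}, d ≤ d' → c d ≤ c d' := by
    intro d d' hdd
    exact Finset.sum_le_sum_of_subset_of_nonneg
      (Finset.range_subset_range.2 hdd) (fun k _ _ => hterm k)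
  have hcstep : ∀ d : ℕ, c (d+1) = c d + Cc * (Bg+1)^(n - d) := fun d =>
    Finset.sum_range_succ _ d
  refine ⟨fun v => -(c (G.dist 0 v)), ?_, ?_⟩
  · simp [SimpleGraph.dist_self, hc]
  · intro v hv
    set f₀ : Fin (n+1) → ℤ := fun v => -(c (G.dist 0 v)) with hf₀
    set d : ℕ := G.dist 0 v with hd
    have hd1 : 1 ≤ d := hconn.pos_dist_of_ne (Ne.symm hv)
    have hdn : d ≤ n := by
      have := dist_lt_card (V' := Fin (n+1)) hconn 0 v
      simp [Fintype.card_fin] at this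
      omega
    obtain ⟨u₀, hadj₀, hclose⟩ := exists_closer hconn (q := 0) hv
    have hu₀v : u₀ ≠ v := Ne.symm ((hadj v u₀).1 hadj₀).1
    have hu₀mem : u₀ ∈ univ.erase v := Finset.mem_erase.2 ⟨hu₀v, mem_univ _⟩
    rw [lam_eq hsym hrow]
    have hsplit : ∑ i ∈ univ.erase v, (-Q v i) * (f₀ v - f₀ i)
        = (∑ i ∈ (univ.erase v).erase u₀, (-Q v i) * (f₀ v - f₀ i))
          + (-Q v u₀) * (f₀ v - f₀ u₀) :=
      (Finset.sum_erase_add _ _ hu₀mem).symm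
    rw [hsplit]
    -- bound the u₀ term
    have hgap : c d = c (d-1) + Cc * (Bg+1)^((n-d)+1) := by
      have h1 : d - 1 + 1 = d := by omega
      have h2 : n - (d-1) = (n-d)+1 := by omega
      have h3 := hcstep (d-1)
      rw [h1, h2] at h3
      exact h3
    have hterm₀ : (-Q v u₀) * (f₀ v - f₀ u₀) ≤ -(Cc * (Bg+1)^((n-d)+1)) := by
      have h1 : f₀ v - f₀ u₀ = c (G.dist 0 u₀) - c d := by simp only [hf₀]; ring
      have h2 : c (G.dist 0 u₀) ≤ c (d-1) := hcmono (by omega)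
      have h3 : f₀ v - f₀ u₀ ≤ -(Cc * (Bg+1)^((n-d)+1)) := by omega
      have hb := hb1 v u₀ hadj₀
      calc (-Q v u₀) * (f₀ v - f₀ u₀) ≤ (-Q v u₀) * (-(Cc * (Bg+1)^((n-d)+1))) :=
            mul_le_mul_of_nonneg_left h3 (by omega)
        _ ≤ 1 * (-(Cc * (Bg+1)^((n-d)+1))) := by
            refine mul_le_mul_of_nonpos_right hb ?_
            have := mul_nonneg hCc0 (pow_nonneg (by omega : (0:ℤ) ≤ Bg+1) ((n-d)+1))
            omega
        _ = -(Cc * (Bg+1)^((n-d)+1)) := one_mul _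
    have hgen : ∀ i ∈ (univ.erase v).erase u₀,
        (-Q v i) * (f₀ v - f₀ i) ≤ (-Q v i) * (Cc * (Bg+1)^(n-d)) := by
      intro i hi
      have hiv : i ≠ v := (Finset.mem_erase.1 (Finset.mem_erase.1 hi).2).1
      by_cases hQi : Q v i = 0
      · simp [hQi]
      · have hAdj : G.Adj v i := (hadj v i).2 ⟨Ne.symm hiv, hQi⟩
        have hdist : G.dist 0 i ≤ d + 1 := dist_adj_le hconn hAdj
        have h2 : c (G.dist 0 i) ≤ c (d+1) := hcmono hdist
        have hst := hcstep d
        have h1 : f₀ v - f₀ i = c (G.dist 0 i) - c d := by simp only [hf₀]; ring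
        have h3 : f₀ v - f₀ i ≤ Cc * (Bg+1)^(n-d) := by omega
        exact mul_le_mul_of_nonneg_left h3 (by have := hoff v i (Ne.symm hiv); omega)
    have hsum_gen : ∑ i ∈ (univ.erase v).erase u₀, (-Q v i) * (f₀ v - f₀ i)
        ≤ Bg * (Cc * (Bg+1)^(n-d)) := by
      calc ∑ i ∈ (univ.erase v).erase u₀, (-Q v i) * (f₀ v - f₀ i)
          ≤ ∑ i ∈ (univ.erase v).erase u₀, (-Q v i) * (Cc * (Bg+1)^(n-d)) :=
            Finset.sum_le_sum hgen
        _ = (∑ i ∈ (univ.erase v).erase u₀, (-Q v i)) * (Cc * (Bg+1)^(n-d)) :=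
            (Finset.sum_mul _ _ _).symm
        _ ≤ Bg * (Cc * (Bg+1)^(n-d)) := by
            refine mul_le_mul_of_nonneg_right ?_
              (mul_nonneg hCc0 (pow_nonneg (by omega) _))
            refine le_trans (Finset.sum_le_sum_of_subset_of_nonneg
              (Finset.erase_subset _ _) ?_) (hBgrow v)
            intro i hi _
            have := hoff v i (Ne.symm (Finset.mem_erase.1 hi).1); omega
    have hpow : (Bg+1)^((n-d)+1) = (Bg+1)^(n-d) * (Bg+1) := pow_succ _ _
    have hfin : Bg * (Cc * (Bg+1)^(n-d)) + -(Cc * (Bg+1)^((n-d)+1))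
        = -(Cc * (Bg+1)^(n-d)) := by rw [hpow]; ring
    have hone : 1 ≤ (Bg+1)^(n-d) := one_le_pow₀ (by omega)
    have hlast : -(Cc * (Bg+1)^(n-d)) ≤ -Cc := by
      have := mul_le_mul_of_nonpos_left hone (by omega : -Cc ≤ 0)
      simp only [mul_one] at this
      have hrw : -Cc * (Bg+1)^(n-d) = -(Cc * (Bg+1)^(n-d)) := by ring
      omega
    have := hCcD v
    omega

lemma cross_formula (hsym : ∀ i j, Q i j = Q j i) (hrow : ∀ i, ∑ j, Q i j = 0)
    (f : Fin (n+1) → ℤ) (B : Finset (Fin (n+1))) :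
    ∑ x ∈ B, lam Q f x = ∑ x ∈ B, ∑ i ∈ univ \ B, (-Q x i) * (f x - f i) := by
  have hsplitset : ∀ x ∈ B, univ.erase x = (B.erase x) ∪ (univ \ B) := by
    intro x hx
    ext i
    simp only [Finset.mem_erase, Finset.mem_union, Finset.mem_sdiff, Finset.mem_univ,
      true_and, and_true]
    constructor
    · intro hix
      by_cases hiB : i ∈ B
      · exact Or.inl ⟨hix, hiB⟩
      · exact Or.inr hiB
    · rintro (⟨hix, _⟩ | hiB)
      · exact hix
      · intro he; exact hiB (he ▸ hx)
  calc ∑ x ∈ B, lam Q f x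
      = ∑ x ∈ B, ((∑ i ∈ B.erase x, (-Q x i) * (f x - f i))
          + ∑ i ∈ univ \ B, (-Q x i) * (f x - f i)) := by
        refine Finset.sum_congr rfl fun x hx => ?_
        rw [lam_eq hsym hrow, hsplitset x hx, Finset.sum_union]
        exact Finset.disjoint_sdiff.mono_left (Finset.erase_subset _ _)
    _ = (∑ x ∈ B, ∑ i ∈ B.erase x, (-Q x i) * (f x - f i))
          + ∑ x ∈ B, ∑ i ∈ univ \ B, (-Q x i) * (f x - f i) := Finset.sum_add_distrib
    _ = ∑ x ∈ B, ∑ i ∈ univ \ B, (-Q x i) * (f x - f i) := by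
        rw [sum_pairs_antisymm B _ (fun x y => by rw [hsym x y]; ring), zero_add]

lemma feas_bound (hsym : ∀ i j, Q i j = Q j i) (hoff : ∀ i j, i ≠ j → Q i j ≤ 0)
    (hrow : ∀ i, ∑ j, Q i j = 0)
    (hconn : (SimpleGraph.fromRel (fun i j => Q i j ≠ 0)).Connected)
    (D : Fin (n+1) → ℤ) :
    ∀ f ∈ feas Q D, ∀ v, f v ≤ (∑ w, max (D w) 0) * (n+1) := by
  set G := SimpleGraph.fromRel (fun i j => Q i j ≠ 0) with hGdef
  have hb1 : ∀ v u, G.Adj v u → 1 ≤ -Q v u := by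
    intro v u h
    rw [hGdef, SimpleGraph.fromRel_adj] at h
    obtain ⟨h1, h2 | h2⟩ := h
    · have := hoff v u h1; omega
    · have := hoff v u h1; rw [hsym u v] at h2; omega
  set P : ℤ := ∑ w, max (D w) 0 with hP
  have hP0 : 0 ≤ P := Finset.sum_nonneg fun v _ => le_max_right _ _
  have hPB : ∀ B : Finset (Fin (n+1)), ∑ x ∈ B, D x ≤ P := by
    intro B
    calc ∑ x ∈ B, D x ≤ ∑ x ∈ B, max (D x) 0 :=
          Finset.sum_le_sum fun i _ => le_max_left _ _
      _ ≤ P := Finset.sum_le_sum_of_subset_of_nonneg (Finset.subset_univ B)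
          (fun i _ _ => le_max_right _ _)
  have main : ∀ k : ℕ, ∀ f ∈ feas Q D, ∀ v,
      (univ.filter fun u => f u < f v).card ≤ k →
      f v ≤ P * ((univ.filter fun u => f u < f v).card : ℤ) := by
    intro k
    induction k with
    | zero =>
      intro f hf v hcard
      by_cases hfv : f v ≤ 0
      · have h1 : (0:ℤ) ≤ P * ((univ.filter fun u => f u < f v).card : ℤ) :=
          mul_nonneg hP0 (Nat.cast_nonneg _)
        omega
      · exfalso
        have h0 : (0 : Fin (n+1)) ∈ univ.filter fun u => f u < f v := by
          simp only [Finset.mem_filter, Finset.mem_univ, true_and, hf.1]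
          omega
        have := Finset.card_pos.2 ⟨_, h0⟩
        omega
    | succ k ih =>
      intro f hf v hcard
      by_cases hfv : f v ≤ 0
      · have h1 : (0:ℤ) ≤ P * ((univ.filter fun u => f u < f v).card : ℤ) :=
          mul_nonneg hP0 (Nat.cast_nonneg _)
        omega
      push_neg at hfv
      set B := univ.filter fun u => f v ≤ f u with hB
      have hvB : v ∈ B := by simp [hB]
      have h0B : (0 : Fin (n+1)) ∉ B := by
        simp only [hB, Finset.mem_filter, Finset.mem_univ, true_and, hf.1, not_le]
        omega
      obtain ⟨w⟩ := hconn.preconnected v 0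
      obtain ⟨a, haB, cc, hcB, hAdj⟩ :=
        exists_cross (B := (↑B : Set (Fin (n+1)))) w (by simpa using hvB)
          (by simpa using h0B)
      have haB' : a ∈ B := by simpa using haB
      have hcB' : cc ∉ B := by simpa using hcB
      have hsum1 : ∑ x ∈ B, lam Q f x ≤ P := by
        refine le_trans (Finset.sum_le_sum fun x hx => hf.2 x ?_) (hPB B)
        intro he; exact h0B (he ▸ hx)
      rw [cross_formula hsym hrow] at hsum1
      have hterm_nonneg : ∀ x ∈ B, ∀ i ∈ univ \ B, 0 ≤ (-Q x i) * (f x - f i) := by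
        intro x hx i hi
        have hxB : f v ≤ f x := (Finset.mem_filter.1 hx).2
        have hiB : ¬ (f v ≤ f i) := by
          have := (Finset.mem_sdiff.1 hi).2
          simpa [hB] using this
        have hxi : x ≠ i := by
          intro he; exact (Finset.mem_sdiff.1 hi).2 (he ▸ hx)
        have := hoff x i hxi
        refine mul_nonneg (by omega) (by omega)
      have hccmem : cc ∈ univ \ B := Finset.mem_sdiff.2 ⟨mem_univ _, hcB'⟩
      have hsingle : (-Q a cc) * (f a - f cc)
          ≤ ∑ x ∈ B, ∑ i ∈ univ \ B, (-Q x i) * (f x - f i) := by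
        refine le_trans (Finset.single_le_sum
          (fun i hi => hterm_nonneg a haB' i hi) hccmem) ?_
        exact Finset.single_le_sum (f := fun x => ∑ i ∈ univ \ B, (-Q x i) * (f x - f i))
          (fun x hx => Finset.sum_nonneg fun i hi => hterm_nonneg x hx i hi) haB'
      have hfa : f v ≤ f a := (Finset.mem_filter.1 haB').2
      have hccv : f cc < f v := by
        have := hcB'
        simp only [hB, Finset.mem_filter, Finset.mem_univ, true_and, not_le] at this
        exact this
      have hfvfc : f v - f cc ≤ (-Q a cc) * (f a - f cc) := by
        have hb := hb1 a cc hAdj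
        have h1 : f v - f cc ≤ f a - f cc := by omega
        have h2 : f a - f cc ≤ (-Q a cc) * (f a - f cc) :=
          le_mul_of_one_le_left (by omega) hb
        omega
      have hkey : f v - f cc ≤ P := le_trans hfvfc (le_trans hsingle hsum1)
      have hccfilter : cc ∈ univ.filter fun u => f u < f v := by
        simp [hccv]
      have hcard1 : 0 < (univ.filter fun u => f u < f v).card :=
        Finset.card_pos.2 ⟨cc, hccfilter⟩
      by_cases hc0 : f cc ≤ 0
      · have h1 : f v ≤ P := by omega
        have h2 : P * 1 ≤ P * ((univ.filter fun u => f u < f v).card : ℤ) := by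
          refine mul_le_mul_of_nonneg_left ?_ hP0
          exact_mod_cast hcard1
        omega
      · push_neg at hc0
        have hsubset : (univ.filter fun u => f u < f cc)
            ⊂ (univ.filter fun u => f u < f v) := by
          refine Finset.ssubset_iff_of_subset ?_ |>.2 ⟨cc, hccfilter, by simp⟩
          intro u hu
          simp only [Finset.mem_filter, Finset.mem_univ, true_and] at hu ⊢
          omega
        have hlt := Finset.card_lt_card hsubset
        have hcard2 : (univ.filter fun u => f u < f cc).card ≤ k := by omega
        have hrec := ih f hf cc hcard2
        have hring : P * (((univ.filter fun u => f u < f cc).card : ℤ) + 1)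
            = P * ((univ.filter fun u => f u < f cc).card : ℤ) + P := by ring
        have hmono : P * (((univ.filter fun u => f u < f cc).card : ℤ) + 1)
            ≤ P * ((univ.filter fun u => f u < f v).card : ℤ) := by
          refine mul_le_mul_of_nonneg_left ?_ hP0
          exact_mod_cast hlt
        omega
  intro f hf v
  have h1 := main ((univ.filter fun u => f u < f v).card) f hf v le_rfl
  have h2 : ((univ.filter fun u => f u < f v).card : ℤ) ≤ (n+1 : ℤ) := by
    have := Finset.card_filter_le univ (fun u => f u < f v)
    have h3 : (univ : Finset (Fin (n+1))).card = n+1 := by simp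
    exact_mod_cast h3 ▸ this
  have := mul_le_mul_of_nonneg_left h2 hP0
  omega

lemma feas_max (hsym : ∀ i j, Q i j = Q j i) (hoff : ∀ i j, i ≠ j → Q i j ≤ 0)
    (hrow : ∀ i, ∑ j, Q i j = 0) {D : Fin (n+1) → ℤ} {f g : Fin (n+1) → ℤ}
    (hf : f ∈ feas Q D) (hg : g ∈ feas Q D) :
    (fun v => f v ⊔ g v) ∈ feas Q D := by
  refine ⟨by simp [hf.1, hg.1], ?_⟩
  intro v hv
  have key : ∀ (f g : Fin (n+1) → ℤ), f ∈ feas Q D → g v ≤ f v →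
      lam Q (fun w => f w ⊔ g w) v ≤ D v := by
    intro f g hf hle
    refine le_trans ?_ (hf.2 v hv)
    rw [lam_eq hsym hrow, lam_eq hsym hrow]
    refine Finset.sum_le_sum fun i hi => ?_
    have hb : 0 ≤ -Q v i := by
      have := hoff v i (Ne.symm (Finset.mem_erase.1 hi).1); omega
    have h1 : f v ⊔ g v = f v := sup_eq_left.2 hle
    have h2 : f i ≤ f i ⊔ g i := le_sup_left
    exact mul_le_mul_of_nonneg_left (by omega) hb
  rcases le_total (g v) (f v) with hle | hle
  · exact key f g hf hle
  · have := key g f hg hle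
    simpa [sup_comm] using this

lemma feas_greatest (hsym : ∀ i j, Q i j = Q j i) (hoff : ∀ i j, i ≠ j → Q i j ≤ 0)
    (hrow : ∀ i, ∑ j, Q i j = 0)
    (hconn : (SimpleGraph.fromRel (fun i j => Q i j ≠ 0)).Connected)
    (D : Fin (n+1) → ℤ) :
    ∃ fs ∈ feas Q D, ∀ f ∈ feas Q D, ∀ v, f v ≤ fs v := by
  have hne := feas_nonempty hsym hoff hrow hconn D
  have hbd := feas_bound hsym hoff hrow hconn D
  have hchoice : ∀ v : Fin (n+1), ∃ g ∈ feas Q D, ∀ f ∈ feas Q D, f v ≤ g v := by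
    intro v
    obtain ⟨ub, ⟨g, hg, hgv⟩, hub⟩ := Int.exists_greatest_of_bdd
      (P := fun z => ∃ f ∈ feas Q D, f v = z)
      ⟨(∑ w, max (D w) 0) * (n+1), by rintro z ⟨f, hf, rfl⟩; exact hbd f hf v⟩
      (by obtain ⟨f, hf⟩ := hne; exact ⟨f v, f, hf, rfl⟩)
    exact ⟨g, hg, fun f hf => hgv ▸ hub (f v) ⟨f, hf, rfl⟩⟩
  choose gg hgfeas hgmax using hchoice
  have hfin : ∀ (t : Finset (Fin (n+1))) (ht : t.Nonempty),
      (fun w => t.sup' ht (fun v => gg v w)) ∈ feas Q D := by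
    intro t ht
    induction ht using Finset.Nonempty.cons_induction with
    | singleton a => simpa using hgfeas a
    | cons a s ha hs ih =>
      have : (fun w => (Finset.cons a s ha).sup' (Finset.cons_nonempty ha) (fun v => gg v w))
          = fun w => gg a w ⊔ s.sup' hs (fun v => gg v w) := by
        funext w
        rw [Finset.sup'_cons hs]
      rw [this]
      exact feas_max hsym hoff hrow (hgfeas a) ih
  refine ⟨fun w => univ.sup' Finset.univ_nonempty (fun v => gg v w),
    hfin univ Finset.univ_nonempty, ?_⟩
  intro f hf v
  exact le_trans (hgmax v f hf)
    (Finset.le_sup' (f := fun u => gg u v) (Finset.mem_univ v))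

theorem exists_eff (hsym : ∀ i j, Q i j = Q j i) (hoff : ∀ i j, i ≠ j → Q i j ≤ 0)
    (hrow : ∀ i, ∑ j, Q i j = 0)
    (hconn : (SimpleGraph.fromRel (fun i j => Q i j ≠ 0)).Connected)
    (D : Fin (n+1) → ℤ) (hdeg : ∑ i, Q i i ≤ 2 * (∑ i, D i) + 2 * n) :
    ∃ f : Fin (n+1) → ℤ, ∀ v, lam Q f v ≤ D v := by
  obtain ⟨fs, hfs, hmax⟩ := feas_greatest hsym hoff hrow hconn D
  set E : Fin (n+1) → ℤ := fun v => D v - lam Q fs v with hE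
  have hE0 : ∀ v, v ≠ 0 → 0 ≤ E v := by
    intro v hv
    have := hfs.2 v hv
    simp only [hE]
    omega
  have hstep : ∀ A : Finset (Fin (n+1)), (0:Fin (n+1)) ∈ A → A ≠ univ →
      ∃ v, v ∉ A ∧ E v + 1 ≤ ∑ u ∈ A, -Q v u := by
    intro A h0A hAuniv
    by_contra hcon
    push_neg at hcon
    have hcon' : ∀ v, v ∉ A → ∑ u ∈ A, -Q v u ≤ E v := by
      intro v hv
      have := hcon v hv
      omega
    set f' : Fin (n+1) → ℤ := fun v => fs v + (if v ∈ A then 0 else 1) with hf'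
    have hf'feas : f' ∈ feas Q D := by
      refine ⟨by simp [hf', h0A, hfs.1], ?_⟩
      intro v hv
      by_cases hvA : v ∈ A
      · have hle : lam Q f' v ≤ lam Q fs v := by
          rw [lam_eq hsym hrow, lam_eq hsym hrow]
          refine Finset.sum_le_sum fun i hi => ?_
          have hb : 0 ≤ -Q v i := by
            have := hoff v i (Ne.symm (Finset.mem_erase.1 hi).1); omega
          have hd : f' v - f' i ≤ fs v - fs i := by
            simp only [hf', hvA, if_true]
            split_ifs <;> omega
          exact mul_le_mul_of_nonneg_left hd hb
        exact le_trans hle (hfs.2 v hv)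
      · have hAsub : A ⊆ univ.erase v := fun u hu =>
          Finset.mem_erase.2 ⟨fun he => hvA (he ▸ hu), mem_univ _⟩
        have hcomp : lam Q f' v = lam Q fs v + ∑ u ∈ A, -Q v u := by
          rw [lam_eq hsym hrow, lam_eq hsym hrow]
          have he : ∀ i ∈ univ.erase v, (-Q v i) * (f' v - f' i)
              = (-Q v i) * (fs v - fs i) + (if i ∈ A then -Q v i else 0) := by
            intro i hi
            simp only [hf', hvA, if_false]
            split_ifs with h
            · ring
            · ring
          rw [Finset.sum_congr rfl he, Finset.sum_add_distrib]
          congr 1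
          rw [Finset.sum_ite, Finset.sum_const_zero, add_zero]
          refine Finset.sum_congr ?_ (fun _ _ => rfl)
          ext i
          simp only [Finset.mem_filter, Finset.mem_erase]
          constructor
          · rintro ⟨_, hiA⟩; exact hiA
          · intro hiA; exact ⟨Finset.mem_erase.1 (hAsub hiA), hiA⟩
        rw [hcomp]
        have h2 := hcon' v hvA
        simp only [hE] at h2
        omega
    obtain ⟨w, hw⟩ : ∃ w, w ∉ A := by
      by_contra h; push_neg at h; exact hAuniv (Finset.eq_univ_iff_forall.2 h)
    have := hmax f' hf'feas w
    simp only [hf', hw, if_false] at this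
    omega
  have main : ∀ k : ℕ, ∀ A : Finset (Fin (n+1)), (0:Fin (n+1)) ∈ A → (univ \ A).card = k →
      2 * ∑ v ∈ univ \ A, E v
        ≤ 2 * (∑ v ∈ univ \ A, ∑ u ∈ A, -Q v u)
          + (∑ v ∈ univ \ A, ∑ u ∈ (univ \ A).erase v, -Q v u) - 2 * k := by
    intro k
    induction k with
    | zero =>
      intro A h0A hcard
      have hempty : univ \ A = ∅ := Finset.card_eq_zero.1 hcard
      simp [hempty]
    | succ k ih =>
      intro A h0A hcard
      have hAuniv : A ≠ univ := by
        intro he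
        rw [he] at hcard
        simp at hcard
      obtain ⟨v₀, hv₀A, hv₀⟩ := hstep A h0A hAuniv
      have hv₀mem : v₀ ∈ univ \ A := Finset.mem_sdiff.2 ⟨mem_univ _, hv₀A⟩
      set C : Finset (Fin (n+1)) := univ \ A with hC
      set C' : Finset (Fin (n+1)) := C.erase v₀ with hC'
      have hsd : univ \ (insert v₀ A) = C' := by
        ext i
        simp only [hC', hC, Finset.mem_sdiff, Finset.mem_erase, Finset.mem_insert,
          Finset.mem_univ, true_and]
        tauto
      have hcard' : (univ \ (insert v₀ A)).card = k := by
        rw [hsd, hC', Finset.card_erase_of_mem hv₀mem, hcard]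
        omega
      have IH := ih (insert v₀ A) (Finset.mem_insert_of_mem h0A) hcard'
      rw [hsd] at IH
      -- abbreviations
      have hEsplit : ∑ v ∈ C, E v = ∑ v ∈ C', E v + E v₀ :=
        (Finset.sum_erase_add C E hv₀mem).symm
      have hA1 : ∑ v ∈ C, ∑ u ∈ A, -Q v u
          = (∑ v ∈ C', ∑ u ∈ A, -Q v u) + ∑ u ∈ A, -Q v₀ u :=
        (Finset.sum_erase_add C _ hv₀mem).symm
      have hA2 : ∀ v ∈ C', ∑ u ∈ insert v₀ A, -Q v u = -Q v v₀ + ∑ u ∈ A, -Q v u := by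
        intro v hv
        exact Finset.sum_insert hv₀A
      have hCsplit : ∑ v ∈ C, ∑ u ∈ C.erase v, -Q v u
          = (∑ v ∈ C', ∑ u ∈ C.erase v, -Q v u) + ∑ u ∈ C', -Q v₀ u :=
        (Finset.sum_erase_add C _ hv₀mem).symm
      have hCinner : ∀ v ∈ C', ∑ u ∈ C.erase v, -Q v u
          = -Q v v₀ + ∑ u ∈ C'.erase v, -Q v u := by
        intro v hv
        have hvne : v ≠ v₀ := (Finset.mem_erase.1 hv).1
        have hset : C.erase v = insert v₀ (C'.erase v) := by
          ext i
          simp only [hC', Finset.mem_erase, Finset.mem_insert]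
          constructor
          · rintro ⟨hiv, hiC⟩
            by_cases h : i = v₀
            · exact Or.inl h
            · exact Or.inr ⟨hiv, h, hiC⟩
          · rintro (rfl | ⟨hiv, _, hiC⟩)
            · exact ⟨Ne.symm hvne, hv₀mem⟩
            · exact ⟨hiv, hiC⟩
        rw [hset]
        refine Finset.sum_insert ?_
        simp only [hC', Finset.mem_erase]
        tauto
      have hsym' : ∑ u ∈ C', -Q v₀ u = ∑ u ∈ C', -Q u v₀ :=
        Finset.sum_congr rfl fun u _ => by rw [hsym v₀ u]
      rw [Finset.sum_congr rfl hA2, Finset.sum_add_distrib] at IH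
      rw [hEsplit, hA1, hCsplit, Finset.sum_congr rfl hCinner, Finset.sum_add_distrib, hsym']
      push_cast
      omega
  -- apply with A = {0}
  have hset0 : univ \ ({0} : Finset (Fin (n+1))) = univ.erase 0 := by
    ext i; simp [Finset.mem_sdiff, Finset.mem_erase, and_comm]
  have hcard0 : (univ \ ({0} : Finset (Fin (n+1)))).card = n := by
    rw [hset0, Finset.card_erase_of_mem (mem_univ _)]
    simp
  have happ := main n {0} (Finset.mem_singleton_self 0) hcard0
  rw [hset0] at happ
  have hsum_singleton : ∀ v, ∑ u ∈ ({0} : Finset (Fin (n+1))), -Q v u = -Q v 0 := by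
    intro v; simp
  rw [Finset.sum_congr rfl (fun v _ => hsum_singleton v)] at happ
  -- trace identity
  have htr : ∀ v, Q v v = ∑ u ∈ univ.erase v, -Q v u := by
    intro v
    have h2 : (∑ u ∈ univ.erase v, Q v u) + Q v v = ∑ u, Q v u :=
      Finset.sum_erase_add univ (fun u => Q v u) (mem_univ v)
    have := hrow v
    rw [Finset.sum_neg_distrib]
    omega
  have htrace : ∑ v, Q v v
      = 2 * (∑ v ∈ univ.erase 0, -Q v 0)
        + ∑ v ∈ univ.erase 0, ∑ u ∈ (univ.erase 0).erase v, -Q v u := by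
    rw [Finset.sum_congr rfl (fun v _ => htr v)]
    rw [← Finset.sum_erase_add univ _ (mem_univ (0 : Fin (n+1)))]
    have hv0 : ∑ u ∈ univ.erase (0:Fin (n+1)), -Q 0 u = ∑ u ∈ univ.erase 0, -Q u 0 :=
      Finset.sum_congr rfl fun u _ => by rw [hsym 0 u]
    have hinner : ∀ v ∈ univ.erase (0:Fin (n+1)), ∑ u ∈ univ.erase v, -Q v u
        = -Q v 0 + ∑ u ∈ (univ.erase 0).erase v, -Q v u := by
      intro v hv
      have hvne : v ≠ 0 := (Finset.mem_erase.1 hv).1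
      have hset : univ.erase v = insert 0 ((univ.erase 0).erase v) := by
        ext i
        simp only [Finset.mem_erase, Finset.mem_insert, Finset.mem_univ, and_true, true_and]
        constructor
        · intro hiv
          by_cases h : i = 0
          · exact Or.inl h
          · exact Or.inr ⟨hiv, h⟩
        · rintro (rfl | ⟨hiv, _⟩)
          · exact Ne.symm hvne
          · exact hiv
      rw [hset]
      refine Finset.sum_insert ?_
      simp
    rw [Finset.sum_congr rfl hinner, Finset.sum_add_distrib, hv0]
    ring
  have hEuniv : ∑ v, E v = ∑ i, D i := by
    simp only [hE, Finset.sum_sub_distrib]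
    have hz : ∑ v, lam Q fs v = 0 := by
      simp only [lam]
      rw [Finset.sum_comm]
      refine Finset.sum_eq_zero fun i _ => ?_
      rw [← Finset.mul_sum, hrow i, mul_zero]
    omega
  have hEsplit0 : ∑ v ∈ univ.erase 0, E v + E 0 = ∑ v, E v :=
    Finset.sum_erase_add univ E (mem_univ 0)
  refine ⟨fs, fun v => ?_⟩
  by_cases hv : v = 0
  · subst hv
    have hgoal : 0 ≤ E 0 := by omega
    simp only [hE] at hgoal
    omega
  · have := hE0 v hv
    simp only [hE] at this
    omega

/-- the non-special divisor `ν_<` of degree `g - 1` -/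
def nuDiv (Q : Matrix (Fin (n+1)) (Fin (n+1)) ℤ) : Fin (n+1) → ℤ :=
  fun v => (∑ j ∈ univ.filter (fun j => j < v), -Q v j) - 1

lemma nu_not_effective (hsym : ∀ i j, Q i j = Q j i) (hoff : ∀ i j, i ≠ j → Q i j ≤ 0)
    (hrow : ∀ i, ∑ j, Q i j = 0) (f : Fin (n+1) → ℤ) :
    ∃ v, nuDiv Q v + lam Q f v ≤ -1 := by
  obtain ⟨u, -, hu⟩ := Finset.exists_min_image univ f Finset.univ_nonempty
  set A : Finset (Fin (n+1)) := univ.filter (fun w => f w = f u) with hA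
  have hAne : A.Nonempty := ⟨u, by simp [hA]⟩
  set v : Fin (n+1) := A.min' hAne with hv
  have hvA : v ∈ A := Finset.min'_mem _ _
  have hfv : f v = f u := (Finset.mem_filter.1 hvA).2
  have hmin : ∀ w, f v ≤ f w := fun w => hfv ▸ hu w (mem_univ w)
  have hlt : ∀ j, j < v → f v + 1 ≤ f j := by
    intro j hj
    rcases lt_or_ge (f v) (f j) with h | h
    · omega
    · exfalso
      have hjA : j ∈ A := by
        have h1 := hmin j
        simp only [hA, Finset.mem_filter, Finset.mem_univ, true_and]
        omega
      have := Finset.min'_le A j hjA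
      rw [← hv] at this
      exact absurd hj (not_lt_of_ge this)
  refine ⟨v, ?_⟩
  have hfilter : ∑ j ∈ univ.filter (fun j => j < v), -Q v j
      = ∑ i ∈ univ.erase v, (if i < v then -Q v i else 0) := by
    rw [Finset.sum_filter]
    rw [← Finset.sum_erase_add univ _ (mem_univ v)]
    simp [lt_irrefl]
  have hkey : lam Q f v + ∑ j ∈ univ.filter (fun j => j < v), -Q v j ≤ 0 := by
    rw [lam_eq hsym hrow, hfilter, ← Finset.sum_add_distrib]
    refine Finset.sum_nonpos fun i hi => ?_
    have hiv : i ≠ v := (Finset.mem_erase.1 hi).1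
    have hb : 0 ≤ -Q v i := by have := hoff v i (Ne.symm hiv); omega
    by_cases h : i < v
    · have h1 := hlt i h
      have h2 : (-Q v i) * (f v - f i) ≤ (-Q v i) * (-1) :=
        mul_le_mul_of_nonneg_left (by omega) hb
      simp only [h, if_true]
      omega
    · have h1 := hmin i
      have h2 : (-Q v i) * (f v - f i) ≤ 0 :=
        mul_nonpos_of_nonneg_of_nonpos hb (by omega)
      simp only [h, if_false]
      omega
  simp only [nuDiv]
  omega

end Eff

theorem covering_radius_eq (n : ℕ) (hn : 1 ≤ n)
    (Q : Matrix (Fin (n+1)) (Fin (n+1)) ℤ)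
    (hsym : ∀ i j, Q i j = Q j i) (hoff : ∀ i j, i ≠ j → Q i j ≤ 0)
    (hrow : ∀ i, ∑ j, Q i j = 0)
    (hconn : (SimpleGraph.fromRel (fun i j => Q i j ≠ 0)).Connected) :
    sInf {R : ℝ | 0 ≤ R ∧ ∀ p ∈ H0 n, ∃ q ∈ lapLattice n Q,
        simpDist n (intVec n q) p ≤ R} =
      ((1 / 2) * ∑ i, ∑ j ∈ Finset.univ.filter (fun j => j ≠ i), -(Q i j : ℝ)) / (n + 1) := by
  set tr : ℤ := ∑ i, Q i i with htrdef
  have htr : ∀ v, Q v v = ∑ u ∈ univ.erase v, -Q v u := by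
    intro v
    have h2 : (∑ u ∈ univ.erase v, Q v u) + Q v v = ∑ u, Q v u :=
      Finset.sum_erase_add univ (fun u => Q v u) (mem_univ v)
    have := hrow v
    rw [Finset.sum_neg_distrib]
    omega
  have htr_even : tr = 2 * ∑ v, ∑ j ∈ univ.filter (fun j => j < v), -Q v j := by
    rw [sum_lt_twice (fun v j => -Q v j)
      (fun x y => by show -Q x y = -Q y x; rw [hsym x y]), htrdef]
    exact Finset.sum_congr rfl fun v _ => htr v
  have htr0 : 0 ≤ tr := by
    refine Finset.sum_nonneg fun v _ => ?_
    rw [htr v]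
    refine Finset.sum_nonneg fun u hu => ?_
    have := hoff v u (Ne.symm (Finset.mem_erase.1 hu).1)
    omega
  have hn1 : (0:ℝ) < (n:ℝ) + 1 := by positivity
  set Rstar : ℝ := (tr:ℝ) / (2*((n:ℝ)+1)) with hRstar
  have hRstar0 : 0 ≤ Rstar := by
    apply div_nonneg _ (by positivity)
    exact_mod_cast htr0
  -- RHS equals Rstar
  have hRHS : ((1 / 2) * ∑ i, ∑ j ∈ Finset.univ.filter (fun j => j ≠ i), -(Q i j : ℝ)) / ((n:ℝ) + 1)
      = Rstar := by
    have hset : ∀ i : Fin (n+1), univ.filter (fun j => j ≠ i) = univ.erase i := by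
      intro i; ext j; simp [Finset.mem_erase]
    have hinner : ∀ i : Fin (n+1), ∑ j ∈ Finset.univ.filter (fun j => j ≠ i), -(Q i j : ℝ)
        = (Q i i : ℝ) := by
      intro i
      rw [hset i]
      rw [show (Q i i : ℝ) = ((∑ u ∈ univ.erase i, -Q i u : ℤ) : ℝ) from by
        rw [← htr i]]
      push_cast
      rfl
    rw [Finset.sum_congr rfl fun i _ => hinner i]
    rw [show ∑ i, (Q i i : ℝ) = (tr : ℝ) from by rw [htrdef]; push_cast; rfl]
    rw [hRstar]
    field_simp
  -- upper bound
  have hupper : ∀ p ∈ H0 n, ∃ q ∈ lapLattice n Q, simpDist n (intVec n q) p ≤ Rstar := by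
    intro p hp
    have hp' : ∑ i, p i = 0 := hp
    set D : Fin (n+1) → ℤ := fun i => ⌊p i + Rstar⌋ with hD
    have hdegD : tr ≤ 2 * (∑ i, D i) + 2*n := by
      have h1 : ∀ i, p i + Rstar - 1 < (D i : ℝ) := fun i => Int.sub_one_lt_floor _
      have h2 : ∑ i, (p i + Rstar - 1) < ∑ i, (D i : ℝ) :=
        Finset.sum_lt_sum_of_nonempty Finset.univ_nonempty fun i _ => h1 i
      have h3 : ∑ i, (p i + Rstar - 1) = ((n:ℝ)+1) * Rstar - ((n:ℝ)+1) := by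
        rw [Finset.sum_sub_distrib, Finset.sum_add_distrib, hp']
        simp [Finset.card_univ, mul_comm]
      have h4 : ((n:ℝ)+1) * Rstar = (tr:ℝ)/2 := by
        rw [hRstar]; field_simp
      have h5 : (tr:ℝ)/2 - ((n:ℝ)+1) < ((∑ i, D i : ℤ) : ℝ) := by
        rw [h3, h4] at h2
        push_cast
        linarith
      have h6 : (tr:ℝ) - 2*((n:ℝ)+1) < ((2 * ∑ i, D i : ℤ) : ℝ) := by
        push_cast at h5 ⊢
        linarith
      have h7 : tr - 2*((n:ℤ)+1) < 2 * ∑ i, D i := by exact_mod_cast h6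
      omega
    obtain ⟨f, hf⟩ := exists_eff hsym hoff hrow hconn D hdegD
    refine ⟨lam Q f, mem_lapLattice.2 ⟨f, rfl⟩, ?_⟩
    simp only [simpDist]
    refine Finset.sup'_le _ _ fun i _ => ?_
    have h3 : (lam Q f i : ℝ) ≤ (D i : ℝ) := by exact_mod_cast hf i
    have h4 : (D i : ℝ) ≤ p i + Rstar := Int.floor_le _
    simp only [intVec]
    linarith
  -- lower bound witness
  set s : ℤ := ∑ v, nuDiv Q v with hs
  have hsval : (s:ℝ) = (tr:ℝ)/2 - ((n:ℝ)+1) := by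
    have h1 : s = (∑ v, ∑ j ∈ univ.filter (fun j => j < v), -Q v j) - ((n:ℤ)+1) := by
      rw [hs]
      simp only [nuDiv]
      rw [Finset.sum_sub_distrib]
      simp [Finset.card_univ]
    have h2 : (tr:ℝ) = 2 * ((∑ v, ∑ j ∈ univ.filter (fun j => j < v), -Q v j : ℤ) : ℝ) := by
      exact_mod_cast congrArg (Int.cast : ℤ → ℝ) htr_even
    rw [show (s:ℝ) = ((∑ v, ∑ j ∈ univ.filter (fun j => j < v), -Q v j : ℤ) : ℝ) - ((n:ℝ)+1) from by
      exact_mod_cast congrArg (Int.cast : ℤ → ℝ) h1]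
    linarith
  set pstar : Fin (n+1) → ℝ := fun i => (nuDiv Q i : ℝ) - (s:ℝ)/((n:ℝ)+1) with hpstar
  have hpstarH0 : pstar ∈ H0 n := by
    show ∑ i, pstar i = 0
    simp only [hpstar]
    rw [Finset.sum_sub_distrib]
    rw [show ∑ i, (nuDiv Q i : ℝ) = (s:ℝ) from by rw [hs]; push_cast; rfl]
    simp [Finset.card_univ]
    field_simp
    ring
  have hlow : ∀ q ∈ lapLattice n Q, Rstar ≤ simpDist n (intVec n q) pstar := by
    intro q hq
    obtain ⟨f, rfl⟩ := mem_lapLattice.1 hq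
    obtain ⟨v, hv⟩ := nu_not_effective hsym hoff hrow (-f)
    have hneg : lam Q (-f) v = - lam Q f v := by
      simp [lam, Finset.sum_neg_distrib]
    rw [hneg] at hv
    -- lam Q f v ≥ nuDiv Q v + 1
    have h1 : nuDiv Q v + 1 ≤ lam Q f v := by omega
    have h2 : Rstar ≤ (lam Q f v : ℝ) - pstar v := by
      have h3 : (nuDiv Q v : ℝ) + 1 ≤ (lam Q f v : ℝ) := by exact_mod_cast h1
      simp only [hpstar]
      have h4 : Rstar = 1 + (s:ℝ)/((n:ℝ)+1) := by
        rw [hRstar, hsval]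
        field_simp
        ring
      linarith
    refine le_trans h2 ?_
    exact Finset.le_sup' (f := fun i => intVec n (lam Q f) i - pstar i) (Finset.mem_univ v)
  -- conclude
  rw [hRHS]
  refine le_antisymm ?_ ?_
  · exact csInf_le ⟨0, fun x hx => hx.1⟩ ⟨hRstar0, hupper⟩
  · refine le_csInf ⟨Rstar, hRstar0, hupper⟩ ?_
    rintro R ⟨hR0, hRall⟩
    obtain ⟨q, hq, hd⟩ := hRall pstar hpstarH0
    exact le_trans (hlow q hq) hd

/-- the covering radius of the Laplacian lattice of a connected
multigraph under the simplicial distance function equals `m/(n+1) = (g+n)/(n+1)`,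
where `m = (1/2) Σ_{i≠j} b_{ij}` is the number of edges. -/
theorem covering_radius_eq_edges_over_n_plus_one (n : ℕ) (hn : 1 ≤ n)
    (Q : Matrix (Fin (n+1)) (Fin (n+1)) ℤ) (hQ : IsConnectedLaplacian n Q) :
    sInf {R : ℝ | 0 ≤ R ∧ ∀ p ∈ H0 n, ∃ q ∈ lapLattice n Q,
        simpDist n (intVec n q) p ≤ R} =
      ((1 / 2) * ∑ i, ∑ j ∈ Finset.univ.filter (fun j => j ≠ i), -(Q i j : ℝ)) / (n + 1) := by
  obtain ⟨⟨hsym, hoff, hrow⟩, hconn⟩ := hQ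
  exact covering_radius_eq n hn Q hsym hoff hrow hconn
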